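/- arXiv:2210.11368 — 2 statements merged into one kernel-verified Lean document; each statement's English description precedes it below -/
import Mathlib

section
/- Explicit form of the Iterative Bregman Projections updates: let γ > 0, let K ∈ ℝ^{n×n} be defined by K_{ij} := exp(−C_{ij}/γ), let p_1, …, p_m ∈ S_n(1) have strictly positive entries, and define f(u,v) := (1/m) Σ_{l=1}^m { ⟨1, B(u_l,v_l)·1⟩ − ⟨u_l, p_l⟩ } for u = (u_1,…,u_m), v = (v_1,…,v_m) with u_l, v_l ∈ ℝ^n, where B(u_l,v_l) := diag(e^{u_l}) K diag(e^{v_l}). Then: (i) for every fixed v, the unique minimizer of f(·,v) over u is given componentwise by u_l = ln p_l − ln(K e^{v_l}) for l = 1,…,m; (ii) for every fixed u, the minimizer of f(u,·) over {v : Σ_{l=1}^m v_l = 0} is given by v_l = (1/m) Σ_{k=1}^m ln(K^T e^{u_k}) − ln(K^T e^{u_l}) for l = 1,…,m. -/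
open Finset

/-- The IBP dual objective
`f(u,v) = (1/m) Σ_l { ⟨1, B(u_l,v_l)·1⟩ − ⟨u_l, p_l⟩ }` with
`B(u_l,v_l) = diag(e^{u_l}) K diag(e^{v_l})`. -/
noncomputable def ibpF (n m : ℕ) (K : Matrix (Fin n) (Fin n) ℝ)
    (p : Fin m → Fin n → ℝ) (u v : Fin m → Fin n → ℝ) : ℝ :=
  (1 / (m : ℝ)) * ∑ l, ((∑ i, ∑ j, Real.exp (u l i) * K i j * Real.exp (v l j))
    - ∑ i, u l i * p l i)

private lemma ibp_gap_nonneg (t : ℝ) : 0 ≤ Real.exp t - 1 - t := by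
  have := Real.add_one_le_exp t; linarith

private lemma ibp_gap_pos {t : ℝ} (h : t ≠ 0) : 0 < Real.exp t - 1 - t := by
  have := Real.add_one_lt_exp h; linarith

private lemma ibpF_repr_u (n m : ℕ) (K : Matrix (Fin n) (Fin n) ℝ)
    (p u v : Fin m → Fin n → ℝ) :
    ibpF n m K p u v = (1 / (m : ℝ)) * ∑ l, ∑ i,
      (Real.exp (u l i) * (∑ j, K i j * Real.exp (v l j)) - u l i * p l i) := by
  unfold ibpF
  congr 1
  refine Finset.sum_congr rfl fun l _ => ?_
  rw [Finset.sum_sub_distrib]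
  congr 1
  refine Finset.sum_congr rfl fun i _ => ?_
  rw [Finset.mul_sum]
  exact Finset.sum_congr rfl fun j _ => by ring

private lemma ibpF_repr_v (n m : ℕ) (K : Matrix (Fin n) (Fin n) ℝ)
    (p u v : Fin m → Fin n → ℝ) :
    ibpF n m K p u v = (1 / (m : ℝ)) * ∑ l,
      ((∑ j, Real.exp (v l j) * (∑ i, K i j * Real.exp (u l i))) - ∑ i, u l i * p l i) := by
  unfold ibpF
  congr 1
  refine Finset.sum_congr rfl fun l _ => ?_
  congr 1
  rw [Finset.sum_comm]
  refine Finset.sum_congr rfl fun j _ => ?_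
  rw [Finset.mul_sum]
  exact Finset.sum_congr rfl fun i _ => by ring

/-- explicit form of the Iterative Bregman Projections updates:
(i) the unique minimizer in `u`, (ii) the unique minimizer in `v` over the subspace
`Σ_l v_l = 0`, both in closed form. -/
theorem ibp_updates_explicit
    (n m : ℕ) (hn : 2 ≤ n) (hm : 1 ≤ m)
    (C : Matrix (Fin n) (Fin n) ℝ) (hC : ∀ i j, 0 ≤ C i j)
    (γ : ℝ) (hγ : 0 < γ)
    (K : Matrix (Fin n) (Fin n) ℝ) (hK : ∀ i j, K i j = Real.exp (-(C i j) / γ))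
    (p : Fin m → Fin n → ℝ)
    (hp : ∀ l, (∀ i, 0 ≤ p l i) ∧ ∑ i, p l i = 1)
    (hppos : ∀ l i, 0 < p l i) :
    (∀ v : Fin m → Fin n → ℝ,
      (∀ u' : Fin m → Fin n → ℝ,
        ibpF n m K p
          (fun l i => Real.log (p l i) - Real.log (∑ j, K i j * Real.exp (v l j))) v
          ≤ ibpF n m K p u' v) ∧
      (∀ u' : Fin m → Fin n → ℝ,
        (∀ u'' : Fin m → Fin n → ℝ, ibpF n m K p u' v ≤ ibpF n m K p u'' v) →
        u' = fun l i => Real.log (p l i) - Real.log (∑ j, K i j * Real.exp (v l j))))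
    ∧
    (∀ u : Fin m → Fin n → ℝ,
      ((∑ l, (fun l j => (1 / (m : ℝ)) * (∑ k, Real.log (∑ i, K i j * Real.exp (u k i)))
            - Real.log (∑ i, K i j * Real.exp (u l i))) l) = 0) ∧
      (∀ v' : Fin m → Fin n → ℝ, (∑ l, v' l) = 0 →
        ibpF n m K p u
          (fun l j => (1 / (m : ℝ)) * (∑ k, Real.log (∑ i, K i j * Real.exp (u k i)))
            - Real.log (∑ i, K i j * Real.exp (u l i)))
          ≤ ibpF n m K p u v') ∧
      (∀ v' : Fin m → Fin n → ℝ, (∑ l, v' l) = 0 →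
        (∀ v'' : Fin m → Fin n → ℝ, (∑ l, v'' l) = 0 →
          ibpF n m K p u v' ≤ ibpF n m K p u v'') →
        v' = fun l j => (1 / (m : ℝ)) * (∑ k, Real.log (∑ i, K i j * Real.exp (u k i)))
            - Real.log (∑ i, K i j * Real.exp (u l i)))) := by
  have hKpos : ∀ i j, 0 < K i j := fun i j => by rw [hK]; exact Real.exp_pos _
  have hmR : (0:ℝ) < (m:ℝ) := by exact_mod_cast Nat.lt_of_lt_of_le Nat.zero_lt_one hm
  have hmne : (m:ℝ) ≠ 0 := ne_of_gt hmR
  have h1m : (0:ℝ) < 1 / (m:ℝ) := by positivity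
  have hne : (Finset.univ : Finset (Fin n)).Nonempty :=
    ⟨⟨0, by omega⟩, Finset.mem_univ _⟩
  constructor
  · -- u-part
    intro v
    set a : Fin m → Fin n → ℝ := fun l i => ∑ j, K i j * Real.exp (v l j) with ha_def
    have hapos : ∀ l i, 0 < a l i := fun l i =>
      Finset.sum_pos (fun j _ => mul_pos (hKpos i j) (Real.exp_pos _)) hne
    set ustar : Fin m → Fin n → ℝ :=
      fun l i => Real.log (p l i) - Real.log (a l i) with hustar_def
    have hpa : ∀ l i, Real.exp (ustar l i) * a l i = p l i := by
      intro l i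
      rw [hustar_def]
      rw [Real.exp_sub, Real.exp_log (hppos l i), Real.exp_log (hapos l i),
        div_mul_cancel₀ _ (ne_of_gt (hapos l i))]
    -- decomposition
    have hdecomp : ∀ u' : Fin m → Fin n → ℝ,
        ibpF n m K p u' v = ibpF n m K p ustar v + (1 / (m:ℝ)) *
          ∑ l, ∑ i, p l i *
            (Real.exp (u' l i - ustar l i) - 1 - (u' l i - ustar l i)) := by
      intro u'
      rw [ibpF_repr_u, ibpF_repr_u]
      have hterm : ∀ l i,
          Real.exp (u' l i) * a l i - u' l i * p l i =
          (Real.exp (ustar l i) * a l i - ustar l i * p l i) +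
          p l i * (Real.exp (u' l i - ustar l i) - 1 - (u' l i - ustar l i)) := by
        intro l i
        have h2 : Real.exp (u' l i) * a l i =
            Real.exp (u' l i - ustar l i) * p l i := by
          rw [← hpa l i, ← mul_assoc, ← Real.exp_add, sub_add_cancel]
        rw [h2, hpa l i]
        set T := u' l i - ustar l i with hT
        linear_combination (p l i) * hT
      have hsum : (∑ l, ∑ i, (Real.exp (u' l i) * a l i - u' l i * p l i)) =
          (∑ l, ∑ i, (Real.exp (ustar l i) * a l i - ustar l i * p l i)) +
          ∑ l, ∑ i, p l i *
            (Real.exp (u' l i - ustar l i) - 1 - (u' l i - ustar l i)) := by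
        rw [← Finset.sum_add_distrib]
        refine Finset.sum_congr rfl fun l _ => ?_
        rw [← Finset.sum_add_distrib]
        exact Finset.sum_congr rfl fun i _ => hterm l i
      rw [hsum]; ring
    have hgap_nonneg : ∀ u' : Fin m → Fin n → ℝ,
        0 ≤ ∑ l, ∑ i, p l i *
          (Real.exp (u' l i - ustar l i) - 1 - (u' l i - ustar l i)) := by
      intro u'
      refine Finset.sum_nonneg fun l _ => Finset.sum_nonneg fun i _ => ?_
      exact mul_nonneg (le_of_lt (hppos l i)) (ibp_gap_nonneg _)
    constructor
    · intro u'
      rw [hdecomp u']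
      have := hgap_nonneg u'
      nlinarith
    · intro u' hmin
      have h1 : ibpF n m K p u' v ≤ ibpF n m K p ustar v := hmin ustar
      rw [hdecomp u'] at h1
      have h2 : ∑ l, ∑ i, p l i *
          (Real.exp (u' l i - ustar l i) - 1 - (u' l i - ustar l i)) ≤ 0 := by
        nlinarith
      have h3 : ∑ l, ∑ i, p l i *
          (Real.exp (u' l i - ustar l i) - 1 - (u' l i - ustar l i)) = 0 :=
        le_antisymm h2 (hgap_nonneg u')
      funext l i
      by_contra hne'
      have ht : u' l i - ustar l i ≠ 0 := sub_ne_zero.mpr hne'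
      have hpos : 0 < ∑ l, ∑ i, p l i *
          (Real.exp (u' l i - ustar l i) - 1 - (u' l i - ustar l i)) := by
        refine Finset.sum_pos' (fun k _ => Finset.sum_nonneg fun j _ =>
          mul_nonneg (le_of_lt (hppos k j)) (ibp_gap_nonneg _))
          ⟨l, Finset.mem_univ _, ?_⟩
        refine Finset.sum_pos' (fun j _ =>
          mul_nonneg (le_of_lt (hppos l j)) (ibp_gap_nonneg _))
          ⟨i, Finset.mem_univ _, mul_pos (hppos l i) (ibp_gap_pos ht)⟩
      linarith
  · -- v-part
    intro u
    set b : Fin m → Fin n → ℝ := fun l j => ∑ i, K i j * Real.exp (u l i) with hb_def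
    have hbpos : ∀ l j, 0 < b l j := fun l j =>
      Finset.sum_pos (fun i _ => mul_pos (hKpos i j) (Real.exp_pos _)) hne
    set vstar : Fin m → Fin n → ℝ :=
      fun l j => (1 / (m : ℝ)) * (∑ k, Real.log (b k j)) - Real.log (b l j) with hvstar_def
    set G : Fin n → ℝ := fun j => Real.exp ((1 / (m : ℝ)) * ∑ k, Real.log (b k j))
      with hG_def
    have hGpos : ∀ j, 0 < G j := fun j => Real.exp_pos _
    have hG : ∀ l j, Real.exp (vstar l j) * b l j = G j := by
      intro l j
      rw [hvstar_def, hG_def]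
      rw [Real.exp_sub, Real.exp_log (hbpos l j),
        div_mul_cancel₀ _ (ne_of_gt (hbpos l j))]
    have hsum0 : (∑ l, vstar l) = 0 := by
      funext j
      rw [Finset.sum_apply]
      simp only [hvstar_def, Pi.zero_apply]
      rw [Finset.sum_sub_distrib, Finset.sum_const, Finset.card_univ,
        Fintype.card_fin, nsmul_eq_mul]
      field_simp
      ring
    have ht0 : ∀ v' : Fin m → Fin n → ℝ, (∑ l, v' l) = 0 →
        ∀ j, ∑ l, (v' l j - vstar l j) = 0 := by
      intro v' hv' j
      rw [Finset.sum_sub_distrib]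
      have h1 : ∑ l, v' l j = 0 := by
        rw [← Finset.sum_apply j Finset.univ v', hv']; rfl
      have h2 : ∑ l, vstar l j = 0 := by
        rw [← Finset.sum_apply j Finset.univ vstar, hsum0]; rfl
      rw [h1, h2, sub_zero]
    have hdecomp : ∀ v' : Fin m → Fin n → ℝ, (∑ l, v' l) = 0 →
        ibpF n m K p u v' = ibpF n m K p u vstar + (1 / (m:ℝ)) *
          ∑ l, ∑ j, G j *
            (Real.exp (v' l j - vstar l j) - 1 - (v' l j - vstar l j)) := by
      intro v' hv'
      rw [ibpF_repr_v, ibpF_repr_v]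
      have hterm : ∀ l j,
          Real.exp (v' l j) * b l j =
          Real.exp (vstar l j) * b l j +
          (G j * (Real.exp (v' l j - vstar l j) - 1 - (v' l j - vstar l j)) +
            G j * (v' l j - vstar l j)) := by
        intro l j
        have h2 : Real.exp (v' l j) * b l j =
            Real.exp (v' l j - vstar l j) * G j := by
          rw [← hG l j, ← mul_assoc, ← Real.exp_add, sub_add_cancel]
        rw [h2, hG l j]
        ring
      have hzero : (∑ l, ∑ j, G j * (v' l j - vstar l j)) = 0 := by
        rw [Finset.sum_comm]
        refine Finset.sum_eq_zero fun j _ => ?_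
        rw [← Finset.mul_sum, ht0 v' hv' j, mul_zero]
      have hsum : (∑ l, ∑ j, Real.exp (v' l j) * b l j) =
          (∑ l, ∑ j, Real.exp (vstar l j) * b l j) +
          ∑ l, ∑ j, G j *
            (Real.exp (v' l j - vstar l j) - 1 - (v' l j - vstar l j)) := by
        have : (∑ l, ∑ j, Real.exp (v' l j) * b l j) =
            (∑ l, ∑ j, Real.exp (vstar l j) * b l j) +
            ((∑ l, ∑ j, G j *
              (Real.exp (v' l j - vstar l j) - 1 - (v' l j - vstar l j))) +
             ∑ l, ∑ j, G j * (v' l j - vstar l j)) := by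
          rw [← Finset.sum_add_distrib, ← Finset.sum_add_distrib]
          refine Finset.sum_congr rfl fun l _ => ?_
          rw [← Finset.sum_add_distrib, ← Finset.sum_add_distrib]
          exact Finset.sum_congr rfl fun j _ => hterm l j
        rw [this, hzero]; ring
      rw [Finset.sum_sub_distrib, Finset.sum_sub_distrib]
      rw [hsum]; ring
    have hgap_nonneg : ∀ v' : Fin m → Fin n → ℝ,
        0 ≤ ∑ l, ∑ j, G j *
          (Real.exp (v' l j - vstar l j) - 1 - (v' l j - vstar l j)) := by
      intro v'
      refine Finset.sum_nonneg fun l _ => Finset.sum_nonneg fun j _ => ?_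
      exact mul_nonneg (le_of_lt (hGpos j)) (ibp_gap_nonneg _)
    refine ⟨hsum0, ?_, ?_⟩
    · intro v' hv'
      rw [hdecomp v' hv']
      have := hgap_nonneg v'
      nlinarith
    · intro v' hv' hmin
      have h1 : ibpF n m K p u v' ≤ ibpF n m K p u vstar := hmin vstar hsum0
      rw [hdecomp v' hv'] at h1
      have h2 : ∑ l, ∑ j, G j *
          (Real.exp (v' l j - vstar l j) - 1 - (v' l j - vstar l j)) ≤ 0 := by
        nlinarith
      funext l j
      by_contra hne'
      have ht : v' l j - vstar l j ≠ 0 := sub_ne_zero.mpr hne'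
      have hpos : 0 < ∑ l, ∑ j, G j *
          (Real.exp (v' l j - vstar l j) - 1 - (v' l j - vstar l j)) := by
        refine Finset.sum_pos' (fun k _ => Finset.sum_nonneg fun j' _ =>
          mul_nonneg (le_of_lt (hGpos j')) (ibp_gap_nonneg _))
          ⟨l, Finset.mem_univ _, ?_⟩
        refine Finset.sum_pos' (fun j' _ =>
          mul_nonneg (le_of_lt (hGpos j')) (ibp_gap_nonneg _))
          ⟨j, Finset.mem_univ _, mul_pos (hGpos j) (ibp_gap_pos ht)⟩
      linarith
end

section
/- Bilinear saddle-point representation of the OT value: let d ∈ ℝ^{n²} be the vectorization of the cost matrix C with ‖d‖_∞ := max_k |d_k| > 0, and let A ∈ {0,1}^{2n×n²} be the incidence matrix such that for x ∈ ℝ^{n²} with matrix form X ∈ ℝ^{n×n}, Ax is the concatenation of the row sums X·1 and the column sums X^T·1. Then for all p, q ∈ S_n(1): W(p,q) = min_{x ∈ S_{n²}(1)} max_{y ∈ [−1,1]^{2n}} { ⟨d, x⟩ + 2‖d‖_∞ ( ⟨y, Ax⟩ − ⟨(p;q), y⟩ ) }, where (p;q) ∈ ℝ^{2n} is the concatenation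 of p and q. -/
open Finset

lemma ot_sup_eval {m : Type*} [Fintype m] (c M : ℝ) (hM : 0 ≤ M) (v : m → ℝ) :
    sSup ((fun y : m → ℝ => c + M * ∑ s, y s * v s) '' {y | ∀ s, |y s| ≤ 1})
      = c + M * ∑ s, |v s| := by
  apply IsGreatest.csSup_eq
  constructor
  · refine ⟨fun s => if 0 ≤ v s then 1 else -1, fun s => by dsimp only; split <;> simp, ?_⟩
    have : ∀ s : m, (if 0 ≤ v s then (1:ℝ) else -1) * v s = |v s| := by
      intro s
      by_cases h : 0 ≤ v s
      · simp [h, abs_of_nonneg h]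
      · simp [h, abs_of_neg (lt_of_not_ge h)]
    simp only [this]
  · rintro _ ⟨y, hy, rfl⟩
    have h : ∑ s, y s * v s ≤ ∑ s, |v s| := by
      apply Finset.sum_le_sum
      intro s _
      calc y s * v s ≤ |y s * v s| := le_abs_self _
        _ = |y s| * |v s| := abs_mul _ _
        _ ≤ 1 * |v s| := mul_le_mul_of_nonneg_right (hy s) (abs_nonneg _)
        _ = |v s| := one_mul _
    exact add_le_add (le_refl c) (mul_le_mul_of_nonneg_left h hM)


lemma ot_exists_rounding {n : ℕ} (C X : Matrix (Fin n) (Fin n) ℝ)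
    (D : ℝ) (hD0 : 0 ≤ D) (hD : ∀ i j, C i j ≤ D) (hC : ∀ i j, 0 ≤ C i j)
    (hX : ∀ i j, 0 ≤ X i j) (hmass : ∑ i, ∑ j, X i j = 1)
    (p q : Fin n → ℝ) (hp0 : ∀ i, 0 ≤ p i) (hp1 : ∑ i, p i = 1)
    (hq0 : ∀ j, 0 ≤ q j) (hq1 : ∑ j, q j = 1) :
    ∃ π : Matrix (Fin n) (Fin n) ℝ, (∀ i j, 0 ≤ π i j) ∧ (∀ i, ∑ j, π i j = p i)
      ∧ (∀ j, ∑ i, π i j = q j) ∧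
      ∑ i, ∑ j, C i j * π i j ≤ ∑ i, ∑ j, C i j * X i j
        + D * ((∑ i, |(∑ j, X i j) - p i|) + (∑ j, |(∑ i, X i j) - q j|)) := by
  set Δ : ℝ := (∑ i, |(∑ j, X i j) - p i|) + (∑ j, |(∑ i, X i j) - q j|) with hΔ
  set r : Fin n → ℝ := fun i => ∑ j, X i j with hrdef
  have hr0 : ∀ i, 0 ≤ r i := fun i => Finset.sum_nonneg fun j _ => hX i j
  set α : Fin n → ℝ := fun i => if p i < r i then p i / r i else 1 with hα
  have hα0 : ∀ i, 0 ≤ α i := by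
    intro i; simp only [hα]; split
    · exact div_nonneg (hp0 i) (hr0 i)
    · norm_num
  have hα1 : ∀ i, α i ≤ 1 := by
    intro i; simp only [hα]; split
    · rename_i h
      have hri : 0 < r i := lt_of_le_of_lt (hp0 i) h
      exact (div_le_one hri).2 h.le
    · exact le_rfl
  set X1 : Matrix (Fin n) (Fin n) ℝ := fun i j => α i * X i j with hX1
  have hX10 : ∀ i j, 0 ≤ X1 i j := fun i j => mul_nonneg (hα0 i) (hX i j)
  have hX1le : ∀ i j, X1 i j ≤ X i j := by
    intro i j
    calc X1 i j = α i * X i j := rfl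
      _ ≤ 1 * X i j := mul_le_mul_of_nonneg_right (hα1 i) (hX i j)
      _ = X i j := one_mul _
  have row1 : ∀ i, ∑ j, X1 i j = min (p i) (r i) := by
    intro i
    have : ∑ j, X1 i j = α i * r i := by
      rw [hrdef]; simp only [hX1]; rw [Finset.mul_sum]
    rw [this]; simp only [hα]; split
    · rename_i h
      have hri : 0 < r i := lt_of_le_of_lt (hp0 i) h
      rw [div_mul_cancel₀ _ (ne_of_gt hri), min_eq_left h.le]
    · rename_i h
      rw [one_mul, min_eq_right (le_of_not_gt h)]
  set c1 : Fin n → ℝ := fun j => ∑ i, X1 i j with hc1def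
  have hc10 : ∀ j, 0 ≤ c1 j := fun j => Finset.sum_nonneg fun i _ => hX10 i j
  set β : Fin n → ℝ := fun j => if q j < c1 j then q j / c1 j else 1 with hβ
  have hβ0 : ∀ j, 0 ≤ β j := by
    intro j; simp only [hβ]; split
    · exact div_nonneg (hq0 j) (hc10 j)
    · norm_num
  have hβ1 : ∀ j, β j ≤ 1 := by
    intro j; simp only [hβ]; split
    · rename_i h
      have hcj : 0 < c1 j := lt_of_le_of_lt (hq0 j) h
      exact (div_le_one hcj).2 h.le
    · exact le_rfl
  set X2 : Matrix (Fin n) (Fin n) ℝ := fun i j => β j * X1 i j with hX2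
  have hX20 : ∀ i j, 0 ≤ X2 i j := fun i j => mul_nonneg (hβ0 j) (hX10 i j)
  have hX2le : ∀ i j, X2 i j ≤ X1 i j := by
    intro i j
    calc X2 i j = β j * X1 i j := rfl
      _ ≤ 1 * X1 i j := mul_le_mul_of_nonneg_right (hβ1 j) (hX10 i j)
      _ = X1 i j := one_mul _
  have col2 : ∀ j, ∑ i, X2 i j = min (q j) (c1 j) := by
    intro j
    have : ∑ i, X2 i j = β j * c1 j := by
      rw [hc1def]; simp only [hX2]; rw [Finset.mul_sum]
    rw [this]; simp only [hβ]; split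
    · rename_i h
      have hcj : 0 < c1 j := lt_of_le_of_lt (hq0 j) h
      rw [div_mul_cancel₀ _ (ne_of_gt hcj), min_eq_left h.le]
    · rename_i h
      rw [one_mul, min_eq_right (le_of_not_gt h)]
  have hrow2le : ∀ i, ∑ j, X2 i j ≤ p i := by
    intro i
    calc ∑ j, X2 i j ≤ ∑ j, X1 i j := Finset.sum_le_sum fun j _ => hX2le i j
      _ = min (p i) (r i) := row1 i
      _ ≤ p i := min_le_left _ _
  have hcol2le : ∀ j, ∑ i, X2 i j ≤ q j := by
    intro j
    rw [col2 j]; exact min_le_left _ _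
  set e : Fin n → ℝ := fun i => p i - ∑ j, X2 i j with he
  set f : Fin n → ℝ := fun j => q j - ∑ i, X2 i j with hf
  have he0 : ∀ i, 0 ≤ e i := fun i => sub_nonneg.2 (hrow2le i)
  have hf0 : ∀ j, 0 ≤ f j := fun j => sub_nonneg.2 (hcol2le j)
  set E : ℝ := ∑ i, e i with hE
  have hE0 : 0 ≤ E := Finset.sum_nonneg fun i _ => he0 i
  set mass2 : ℝ := ∑ i, ∑ j, X2 i j with hmass2
  have hEeq : E = 1 - mass2 := by
    rw [hE, hmass2]; simp only [he]
    rw [Finset.sum_sub_distrib, hp1]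
  have hfE : ∑ j, f j = E := by
    rw [hEeq]; simp only [hf]
    rw [Finset.sum_sub_distrib, hq1, hmass2, Finset.sum_comm]
  -- bound E ≤ Δ
  have hc1le : ∀ j, c1 j ≤ ∑ i, X i j := by
    intro j; exact Finset.sum_le_sum fun i _ => hX1le i j
  have hmass1 : ∑ i, ∑ j, X1 i j = ∑ i, min (p i) (r i) :=
    Finset.sum_congr rfl fun i _ => row1 i
  have hEΔ : E ≤ Δ := by
    have h1 : 1 - ∑ i, ∑ j, X1 i j ≤ ∑ i, |r i - p i| := by
      rw [hmass1, ← hmass]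
      rw [← Finset.sum_sub_distrib]
      apply Finset.sum_le_sum
      intro i _
      have : r i - min (p i) (r i) = max (r i - p i) 0 := by
        rcases le_total (p i) (r i) with h | h
        · rw [min_eq_left h, max_eq_left (sub_nonneg.2 h)]
        · rw [min_eq_right h, max_eq_right (sub_nonpos.2 h), sub_self]
      rw [hrdef] at this ⊢
      rw [this]
      exact max_le (le_abs_self _) (abs_nonneg _)
    have h2 : (∑ i, ∑ j, X1 i j) - mass2 ≤ ∑ j, |(∑ i, X i j) - q j| := by
      have e1 : ∑ i, ∑ j, X1 i j = ∑ j, c1 j := by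
        rw [hc1def]; exact Finset.sum_comm 
      have e2 : mass2 = ∑ j, min (q j) (c1 j) := by
        rw [hmass2, Finset.sum_comm]
        exact Finset.sum_congr rfl fun j _ => col2 j
      rw [e1, e2, ← Finset.sum_sub_distrib]
      apply Finset.sum_le_sum
      intro j _
      have h3 : c1 j - min (q j) (c1 j) = max (c1 j - q j) 0 := by
        rcases le_total (q j) (c1 j) with h | h
        · rw [min_eq_left h, max_eq_left (sub_nonneg.2 h)]
        · rw [min_eq_right h, max_eq_right (sub_nonpos.2 h), sub_self]
      rw [h3]
      apply max_le
      · calc c1 j - q j ≤ (∑ i, X i j) - q j := by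
              have := hc1le j; linarith
          _ ≤ |(∑ i, X i j) - q j| := le_abs_self _
      · exact abs_nonneg _
    rw [hEeq]; rw [hΔ]; linarith
  have hcost2 : ∑ i, ∑ j, C i j * X2 i j ≤ ∑ i, ∑ j, C i j * X i j := by
    apply Finset.sum_le_sum; intro i _
    apply Finset.sum_le_sum; intro j _
    exact mul_le_mul_of_nonneg_left (le_trans (hX2le i j) (hX1le i j)) (hC i j)
  have hΔ0 : 0 ≤ Δ := by
    rw [hΔ]
    have : (0:ℝ) ≤ ∑ i, |(∑ j, X i j) - p i| := Finset.sum_nonneg fun i _ => abs_nonneg _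
    have : (0:ℝ) ≤ ∑ j, |(∑ i, X i j) - q j| := Finset.sum_nonneg fun j _ => abs_nonneg _
    positivity
  by_cases hEz : E = 0
  · -- no mass missing: X2 is already feasible
    have hez : ∀ i, e i = 0 := by
      have hsum : ∑ i, e i = 0 := by rw [← hE]; exact hEz
      intro i
      exact (Finset.sum_eq_zero_iff_of_nonneg (fun i _ => he0 i)).1 hsum i (mem_univ i)
    have hfz : ∀ j, f j = 0 := by
      intro j
      have hfsum : ∑ j, f j = 0 := by rw [hfE, hEz]
      exact (Finset.sum_eq_zero_iff_of_nonneg (fun j _ => hf0 j)).1 hfsum j (mem_univ j)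
    refine ⟨X2, hX20, ?_, ?_, ?_⟩
    · intro i; have := hez i; simp only [he] at this; linarith
    · intro j; have := hfz j; simp only [hf] at this; linarith
    · calc ∑ i, ∑ j, C i j * X2 i j ≤ ∑ i, ∑ j, C i j * X i j := hcost2
        _ ≤ ∑ i, ∑ j, C i j * X i j + D * Δ := by nlinarith
  · have hEpos : 0 < E := lt_of_le_of_ne hE0 (Ne.symm hEz)
    set π : Matrix (Fin n) (Fin n) ℝ := fun i j => X2 i j + e i * f j / E with hπ
    refine ⟨π, ?_, ?_, ?_, ?_⟩
    · intro i j
      have : 0 ≤ e i * f j / E := div_nonneg (mul_nonneg (he0 i) (hf0 j)) hE0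
      exact add_nonneg (hX20 i j) this
    · intro i
      have : ∑ j, π i j = (∑ j, X2 i j) + (∑ j, e i * f j / E) := by
        simp only [hπ]; rw [Finset.sum_add_distrib]
      rw [this]
      have h4 : ∑ j, e i * f j / E = e i := by
        have : ∑ j, e i * f j / E = e i * (∑ j, f j) / E := by
          rw [Finset.mul_sum, Finset.sum_div]
        rw [this, hfE, mul_div_assoc, div_self hEz, mul_one]
      rw [h4]; simp only [he]; ring
    · intro j
      have : ∑ i, π i j = (∑ i, X2 i j) + (∑ i, e i * f j / E) := by
        simp only [hπ]; rw [Finset.sum_add_distrib]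
      rw [this]
      have h4 : ∑ i, e i * f j / E = f j := by
        have : ∑ i, e i * f j / E = (∑ i, e i) * f j / E := by
          rw [Finset.sum_mul, Finset.sum_div]
        rw [this, ← hE, mul_comm, mul_div_assoc, div_self hEz, mul_one]
      rw [h4]; simp only [hf]; ring
    · have hsplit : ∑ i, ∑ j, C i j * π i j
          = (∑ i, ∑ j, C i j * X2 i j) + ∑ i, ∑ j, C i j * (e i * f j / E) := by
        rw [← Finset.sum_add_distrib]
        apply Finset.sum_congr rfl; intro i _
        rw [← Finset.sum_add_distrib]
        apply Finset.sum_congr rfl; intro j _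
        simp only [hπ]; ring
      have hpen : ∑ i, ∑ j, C i j * (e i * f j / E) ≤ D * E := by
        have step1 : ∑ i, ∑ j, C i j * (e i * f j / E)
            ≤ ∑ i, ∑ j, D * (e i * f j / E) := by
          apply Finset.sum_le_sum; intro i _
          apply Finset.sum_le_sum; intro j _
          exact mul_le_mul_of_nonneg_right (hD i j)
            (div_nonneg (mul_nonneg (he0 i) (hf0 j)) hE0)
        have step2 : ∑ i, ∑ j, D * (e i * f j / E) = D * E := by
          have inner : ∀ i, ∑ j, D * (e i * f j / E) = D * e i := by
            intro i
            have h5 : ∑ j, e i * f j / E = e i := by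
              have h6 : (∑ j, e i * f j / E) = e i * (∑ j, f j) / E := by
                rw [Finset.mul_sum, Finset.sum_div]
              rw [h6, hfE, mul_div_assoc, div_self hEz, mul_one]
            calc ∑ j, D * (e i * f j / E) = D * ∑ j, e i * f j / E := by
                  rw [Finset.mul_sum]
              _ = D * e i := by rw [h5]
          rw [Finset.sum_congr rfl fun i _ => inner i, ← Finset.mul_sum, ← hE]
        linarith
      calc ∑ i, ∑ j, C i j * π i j
          = (∑ i, ∑ j, C i j * X2 i j) + ∑ i, ∑ j, C i j * (e i * f j / E) := hsplit
        _ ≤ (∑ i, ∑ j, C i j * X i j) + D * E := add_le_add hcost2 hpen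
        _ ≤ (∑ i, ∑ j, C i j * X i j) + D * Δ := by
            have := mul_le_mul_of_nonneg_left hEΔ hD0; linarith


/-- bilinear saddle-point representation of the OT value:
`W(p,q) = min_{x ∈ S_{n²}(1)} max_{y ∈ [−1,1]^{2n}}
  { ⟨d,x⟩ + 2‖d‖_∞ (⟨y, Ax⟩ − ⟨(p;q), y⟩) }`. -/
theorem ot_saddle_point_representation
    (n : ℕ) (hn : 2 ≤ n) (C : Matrix (Fin n) (Fin n) ℝ)
    (hC : ∀ i j, 0 ≤ C i j)
    -- the vectorized cost
    (d : Fin n × Fin n → ℝ) (hd : d = fun k => C k.1 k.2)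
    -- its sup-norm ‖d‖_∞, assumed positive
    (dmax : ℝ) (hdmax : IsGreatest (Set.range fun k => |d k|) dmax) (hdpos : 0 < dmax)
    -- the incidence operator: row sums and column sums of the matrix form of x
    (A : (Fin n × Fin n → ℝ) → (Fin n ⊕ Fin n → ℝ))
    (hA : ∀ x, A x = Sum.elim (fun i => ∑ j, x (i, j)) (fun j => ∑ i, x (i, j)))
    (p q : Fin n → ℝ)
    (hp : (∀ i, 0 ≤ p i) ∧ ∑ i, p i = 1)
    (hq : (∀ i, 0 ≤ q i) ∧ ∑ i, q i = 1) :
    sInf ((fun π : Matrix (Fin n) (Fin n) ℝ => ∑ i, ∑ j, C i j * π i j) ''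
        {π | (∀ i j, 0 ≤ π i j) ∧ (∀ i, ∑ j, π i j = p i) ∧ (∀ j, ∑ i, π i j = q j)})
      =
    sInf ((fun x : Fin n × Fin n → ℝ =>
        sSup ((fun y : Fin n ⊕ Fin n → ℝ =>
            (∑ k, d k * x k) + 2 * dmax *
              ((∑ s, y s * A x s) - ∑ s, Sum.elim p q s * y s)) ''
          {y | ∀ s, |y s| ≤ 1})) ''
      {x | (∀ k, 0 ≤ x k) ∧ ∑ k, x k = 1}) := by
  obtain ⟨hp0, hp1⟩ := hp
  obtain ⟨hq0, hq1⟩ := hq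
  have hCd : ∀ i j, C i j ≤ dmax := by
    intro i j
    have h1 : |d (i, j)| ≤ dmax := hdmax.2 ⟨(i, j), rfl⟩
    rw [hd] at h1
    simpa [abs_of_nonneg (hC i j)] using h1
  have hd0 : ∀ k, 0 ≤ d k := by intro k; rw [hd]; exact hC k.1 k.2
  -- closed form of the inner sup
  set F : (Fin n × Fin n → ℝ) → ℝ := fun x =>
    (∑ k, d k * x k) + 2 * dmax * ∑ s, |A x s - Sum.elim p q s| with hF
  have hsup : ∀ x : Fin n × Fin n → ℝ,
      sSup ((fun y : Fin n ⊕ Fin n → ℝ =>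
          (∑ k, d k * x k) + 2 * dmax *
            ((∑ s, y s * A x s) - ∑ s, Sum.elim p q s * y s)) ''
        {y | ∀ s, |y s| ≤ 1}) = F x := by
    intro x
    have hfun : (fun y : Fin n ⊕ Fin n → ℝ =>
        (∑ k, d k * x k) + 2 * dmax *
          ((∑ s, y s * A x s) - ∑ s, Sum.elim p q s * y s))
        = fun y => (∑ k, d k * x k) + (2 * dmax) *
          ∑ s, y s * (A x s - Sum.elim p q s) := by
      funext y
      rw [← Finset.sum_sub_distrib]
      congr 2
      apply Finset.sum_congr rfl
      intro s _
      ring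
    rw [hfun, ot_sup_eval _ _ (by positivity) _]
  have himg : ∀ x : Fin n × Fin n → ℝ,
      ((∀ k, 0 ≤ x k) ∧ ∑ k, x k = 1) →
      F x = (∑ k, d k * x k) + 2 * dmax *
        ((∑ i, |(∑ j, x (i, j)) - p i|) + (∑ j, |(∑ i, x (i, j)) - q j|)) := by
    intro x _
    simp only [hF]
    congr 1
    congr 1
    rw [Fintype.sum_sum_type]
    congr 1 <;> (apply Finset.sum_congr rfl; intro s _; rw [hA]; simp)
  -- the two sets
  set S := ((fun π : Matrix (Fin n) (Fin n) ℝ => ∑ i, ∑ j, C i j * π i j) ''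
      {π | (∀ i j, 0 ≤ π i j) ∧ (∀ i, ∑ j, π i j = p i) ∧ (∀ j, ∑ i, π i j = q j)}) with hS
  have hrw : ((fun x : Fin n × Fin n → ℝ =>
      sSup ((fun y : Fin n ⊕ Fin n → ℝ =>
          (∑ k, d k * x k) + 2 * dmax *
            ((∑ s, y s * A x s) - ∑ s, Sum.elim p q s * y s)) ''
        {y | ∀ s, |y s| ≤ 1})) ''
      {x | (∀ k, 0 ≤ x k) ∧ ∑ k, x k = 1})
      = F '' {x | (∀ k, 0 ≤ x k) ∧ ∑ k, x k = 1} := by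
    apply Set.image_congr
    intro x _
    exact hsup x
  rw [hrw]
  set T := F '' {x | (∀ k, 0 ≤ x k) ∧ ∑ k, x k = 1} with hT
  -- nonemptiness witnesses
  have hπ0mem : (fun i j => p i * q j) ∈
      {π : Matrix (Fin n) (Fin n) ℝ | (∀ i j, 0 ≤ π i j) ∧ (∀ i, ∑ j, π i j = p i)
        ∧ (∀ j, ∑ i, π i j = q j)} := by
    refine ⟨fun i j => mul_nonneg (hp0 i) (hq0 j), ?_, ?_⟩
    · intro i; rw [← Finset.mul_sum, hq1, mul_one]
    · intro j; rw [← Finset.sum_mul, hp1, one_mul]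
  have hSne : S.Nonempty := ⟨_, ⟨_, hπ0mem, rfl⟩⟩
  have hx0mem : (fun k : Fin n × Fin n => p k.1 * q k.2) ∈
      {x : Fin n × Fin n → ℝ | (∀ k, 0 ≤ x k) ∧ ∑ k, x k = 1} := by
    constructor
    · intro k; exact mul_nonneg (hp0 k.1) (hq0 k.2)
    · rw [Fintype.sum_prod_type]
      calc ∑ i, ∑ j, p i * q j = ∑ i, p i * ∑ j, q j := by
            apply Finset.sum_congr rfl; intro i _; rw [Finset.mul_sum]
        _ = 1 := by rw [hq1]; simp [hp1]
  have hTne : T.Nonempty := ⟨_, ⟨_, hx0mem, rfl⟩⟩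
  -- bounded below by 0
  have hSbdd : BddBelow S := by
    refine ⟨0, ?_⟩
    rintro _ ⟨π, ⟨hπnn, _, _⟩, rfl⟩
    exact Finset.sum_nonneg fun i _ => Finset.sum_nonneg fun j _ =>
      mul_nonneg (hC i j) (hπnn i j)
  have hTbdd : BddBelow T := by
    refine ⟨0, ?_⟩
    rintro _ ⟨x, ⟨hxnn, _⟩, rfl⟩
    simp only [hF]
    have h1 : (0:ℝ) ≤ ∑ k, d k * x k :=
      Finset.sum_nonneg fun k _ => mul_nonneg (hd0 k) (hxnn k)
    have h2 : (0:ℝ) ≤ ∑ s, |A x s - Sum.elim p q s| :=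
      Finset.sum_nonneg fun s _ => abs_nonneg _
    have : (0:ℝ) ≤ 2 * dmax := by positivity
    nlinarith
  apply le_antisymm
  · -- sInf S ≤ sInf T, via rounding
    apply le_csInf hTne
    rintro _ ⟨x, hx, rfl⟩
    obtain ⟨hxnn, hxsum⟩ := hx
    have hXmass : ∑ i, ∑ j, x (i, j) = 1 := by
      rw [← Fintype.sum_prod_type]; exact hxsum
    obtain ⟨π, hπnn, hπr, hπc, hπcost⟩ :=
      ot_exists_rounding C (fun i j => x (i, j)) dmax hdpos.le hCd hC
        (fun i j => hxnn (i, j)) hXmass p q hp0 hp1 hq0 hq1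
    have hcostX : ∑ i, ∑ j, C i j * x (i, j) = ∑ k, d k * x k := by
      rw [hd, Fintype.sum_prod_type]
    have hmem : (∑ i, ∑ j, C i j * π i j) ∈ S := ⟨π, ⟨hπnn, hπr, hπc⟩, rfl⟩
    have hle := csInf_le hSbdd hmem
    have hcalc : F x = (∑ k, d k * x k) + 2 * dmax *
        ((∑ i, |(∑ j, x (i, j)) - p i|) + (∑ j, |(∑ i, x (i, j)) - q j|)) :=
      himg x ⟨hxnn, hxsum⟩
    have hΔ0 : (0:ℝ) ≤ (∑ i, |(∑ j, x (i, j)) - p i|) + (∑ j, |(∑ i, x (i, j)) - q j|) := by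
      have h1 : (0:ℝ) ≤ ∑ i, |(∑ j, x (i, j)) - p i| :=
        Finset.sum_nonneg fun i _ => abs_nonneg _
      have h2 : (0:ℝ) ≤ ∑ j, |(∑ i, x (i, j)) - q j| :=
        Finset.sum_nonneg fun j _ => abs_nonneg _
      linarith
    rw [hcalc]
    rw [← hcostX]
    nlinarith [hπcost, hle]
  · -- sInf T ≤ sInf S
    apply le_csInf hSne
    rintro _ ⟨π, ⟨hπnn, hπr, hπc⟩, rfl⟩
    set x : Fin n × Fin n → ℝ := fun k => π k.1 k.2 with hxdef
    have hxmem : x ∈ {x : Fin n × Fin n → ℝ | (∀ k, 0 ≤ x k) ∧ ∑ k, x k = 1} := by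
      constructor
      · intro k; exact hπnn k.1 k.2
      · rw [Fintype.sum_prod_type]
        calc ∑ i, ∑ j, π i j = ∑ i, p i := Finset.sum_congr rfl fun i _ => hπr i
          _ = 1 := hp1
    have hFx : F x = ∑ i, ∑ j, C i j * π i j := by
      have hcalc := himg x hxmem
      have hzero : (∑ i, |(∑ j, x (i, j)) - p i|) + (∑ j, |(∑ i, x (i, j)) - q j|) = 0 := by
        have h1 : ∑ i, |(∑ j, x (i, j)) - p i| = 0 := by
          apply Finset.sum_eq_zero; intro i _
          rw [show (∑ j, x (i, j)) = p i from hπr i]; simp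
        have h2 : ∑ j, |(∑ i, x (i, j)) - q j| = 0 := by
          apply Finset.sum_eq_zero; intro j _
          rw [show (∑ i, x (i, j)) = q j from hπc j]; simp
        rw [h1, h2, add_zero]
      rw [hcalc, hzero, mul_zero, add_zero, hd, Fintype.sum_prod_type]
    have hmem : F x ∈ T := ⟨x, hxmem, rfl⟩
    calc sInf T ≤ F x := csInf_le hTbdd hmem
      _ = ∑ i, ∑ j, C i j * π i j := hFx
end
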